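/- arXiv:0911.3370 — 2 statements merged into one kernel-verified Lean document; each statement's English description precedes it below -/
import Mathlib

section
/- Let μ > p, p ∈ ℤ⁺, μ non-integer, m = ⌈μ⌉, ν = m - μ, f defined on ℕ_a, a ∈ ℤ⁺, with Δ^k f(a) = 0 for k = p, ..., m-1. Let γ, δ > 1 with 1/γ + 1/δ = 1, and b ≥ a+m-p. Then ∑_{j=a+m-p}^{b} |Δ^p f(j)|^δ ≤ (1/Γ(μ-p)^δ)·[∑_{j=a+m-p}^{b} (∑_{s=a+ν}^{j-μ+p} ((j-s-1)^(μ-p-1))^γ)^{δ/γ}]·(∑_{s=a+ν}^{b-μ+p} |Δ_*^μ f(s)|^δ). -/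
open Finset

/-- Generalized falling factorial `t^(α) = Γ(t+1)/Γ(t-α+1)`. -/
noncomputable def gff (t α : ℝ) : ℝ := Real.Gamma (t + 1) / Real.Gamma (t - α + 1)

/-- Forward difference operator `Δf(t) = f(t+1) - f(t)`. -/
def fdiff (f : ℝ → ℝ) : ℝ → ℝ := fun t => f (t + 1) - f t

/-- The ν-th fractional sum with base point `a`:
`Δ^{-ν} f(t) = (1/Γ(ν)) ∑_{s=a}^{t-ν} (t-s-1)^(ν-1) f(s)`, the sum running over
`s = a, a+1, ..., t-ν` (for `t ∈ ℕ_{a+ν}`, there are `t-ν-a+1` terms). -/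
noncomputable def fsum (ν a : ℝ) (f : ℝ → ℝ) (t : ℝ) : ℝ :=
  (1 / Real.Gamma ν) *
    ∑ j ∈ Finset.range ((⌊t - ν - a⌋).toNat + 1),
      gff (t - (a + j) - 1) (ν - 1) * f (a + j)

/-- The Caputo-like fractional difference `Δ_*^μ f = Δ^{-(⌈μ⌉-μ)} (Δ^{⌈μ⌉} f)`. -/
noncomputable def caputo (μ a : ℝ) (f : ℝ → ℝ) : ℝ → ℝ :=
  fsum ((⌈μ⌉₊ : ℝ) - μ) a (fdiff^[⌈μ⌉₊] f)

private lemma gamma_vdm (α β : ℝ) (hα : 0 < α) (hβ : 0 < β) (K : ℕ) :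
    ∑ k ∈ Finset.range (K + 1),
      Real.Gamma ((K : ℝ) - k + α) / Real.Gamma ((K : ℝ) - k + 1) *
        (Real.Gamma ((k : ℝ) + β) / Real.Gamma ((k : ℝ) + 1)) =
      Real.Gamma α * Real.Gamma β * Real.Gamma ((K : ℝ) + α + β) /
        (Real.Gamma (α + β) * Real.Gamma ((K : ℝ) + 1)) := by
  have hαβ : 0 < Real.Gamma (α + β) := Real.Gamma_pos_of_pos (by linarith)
  induction K with
  | zero =>
      simp only [Finset.sum_range_one, Nat.cast_zero, sub_zero, zero_sub, neg_zero, zero_add]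
      rw [Real.Gamma_one]
      field_simp
  | succ K ih =>
      set T : ℕ → ℕ → ℝ := fun n k =>
        Real.Gamma ((n : ℝ) - k + α) / Real.Gamma ((n : ℝ) - k + 1) *
          (Real.Gamma ((k : ℝ) + β) / Real.Gamma ((k : ℝ) + 1)) with hT
      have key : ((K : ℝ) + 1) * ∑ k ∈ Finset.range (K + 1 + 1), T (K + 1) k =
          ((K : ℝ) + α + β) * ∑ k ∈ Finset.range (K + 1), T K k := by
      -- expand per-term identities
        have piece1 : ∀ k ∈ Finset.range (K + 1),
            ((K : ℝ) + 1 - k) * T (K + 1) k = ((K : ℝ) - k + α) * T K k := by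
          intro k hk
          have hkK : (k : ℝ) ≤ K := by
            exact_mod_cast Nat.lt_succ_iff.mp (Finset.mem_range.mp hk)
          have e1 : ((K + 1 : ℕ) : ℝ) - k + α = ((K : ℝ) - k + α) + 1 := by push_cast; ring
          have e2 : ((K + 1 : ℕ) : ℝ) - k + 1 = ((K : ℝ) - k + 1) + 1 := by push_cast; ring
          have hx : (0 : ℝ) < (K : ℝ) - k + α := by linarith
          have hy : (0 : ℝ) < (K : ℝ) - k + 1 := by linarith
          have hyne : Real.Gamma ((K : ℝ) - k + 1) ≠ 0 := (Real.Gamma_pos_of_pos hy).ne'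
          simp only [hT, e1, e2, Real.Gamma_add_one hx.ne', Real.Gamma_add_one hy.ne']
          field_simp
          ring
        have piece2 : ∀ k ∈ Finset.range (K + 1),
            ((k : ℝ) + 1) * T (K + 1) (k + 1) = ((k : ℝ) + β) * T K k := by
          intro k hk
          have e1 : ((K + 1 : ℕ) : ℝ) - ((k + 1 : ℕ) : ℝ) + α = (K : ℝ) - k + α := by
            push_cast; ring
          have e2 : ((K + 1 : ℕ) : ℝ) - ((k + 1 : ℕ) : ℝ) + 1 = (K : ℝ) - k + 1 := by
            push_cast; ring
          have e3 : ((k + 1 : ℕ) : ℝ) + β = ((k : ℝ) + β) + 1 := by push_cast; ring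
          have e4 : ((k + 1 : ℕ) : ℝ) + 1 = ((k : ℝ) + 1) + 1 := by push_cast; ring
          have hkK : (k : ℝ) ≤ K := by
            exact_mod_cast Nat.lt_succ_iff.mp (Finset.mem_range.mp hk)
          have hx : (0 : ℝ) < (k : ℝ) + β := by positivity
          have hy : (0 : ℝ) < (k : ℝ) + 1 := by positivity
          have hB : Real.Gamma ((K : ℝ) - k + 1) ≠ 0 :=
            (Real.Gamma_pos_of_pos (by linarith)).ne'
          have hD : Real.Gamma ((k : ℝ) + 1) ≠ 0 := (Real.Gamma_pos_of_pos hy).ne'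
          simp only [hT, e1, e2, e3, e4, Real.Gamma_add_one hx.ne', Real.Gamma_add_one hy.ne']
          field_simp
        calc ((K : ℝ) + 1) * ∑ k ∈ Finset.range (K + 1 + 1), T (K + 1) k
            = ∑ k ∈ Finset.range (K + 1 + 1),
                (((K : ℝ) + 1 - k) * T (K + 1) k + (k : ℝ) * T (K + 1) k) := by
              rw [Finset.mul_sum]
              exact Finset.sum_congr rfl fun k _ => by ring
          _ = (∑ k ∈ Finset.range (K + 1 + 1), ((K : ℝ) + 1 - k) * T (K + 1) k)
              + ∑ k ∈ Finset.range (K + 1 + 1), (k : ℝ) * T (K + 1) k := by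
              rw [Finset.sum_add_distrib]
          _ = (∑ k ∈ Finset.range (K + 1), ((K : ℝ) + 1 - k) * T (K + 1) k)
              + ∑ k ∈ Finset.range (K + 1), ((k : ℝ) + 1) * T (K + 1) (k + 1) := by
              have h1 : ∑ k ∈ Finset.range (K + 1 + 1), ((K : ℝ) + 1 - k) * T (K + 1) k
                  = ∑ k ∈ Finset.range (K + 1), ((K : ℝ) + 1 - k) * T (K + 1) k := by
                rw [Finset.sum_range_succ]
                have hz : ((K : ℝ) + 1 - ((K + 1 : ℕ) : ℝ)) = 0 := by push_cast; ring
                rw [hz, zero_mul, add_zero]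
              have h2 : ∑ k ∈ Finset.range (K + 1 + 1), (k : ℝ) * T (K + 1) k
                  = ∑ k ∈ Finset.range (K + 1), ((k : ℝ) + 1) * T (K + 1) (k + 1) := by
                rw [Finset.sum_range_succ']
                push_cast
                simp
              rw [h1, h2]
          _ = (∑ k ∈ Finset.range (K + 1), ((K : ℝ) - k + α) * T K k)
              + ∑ k ∈ Finset.range (K + 1), ((k : ℝ) + β) * T K k := by
              rw [Finset.sum_congr rfl piece1, Finset.sum_congr rfl piece2]
          _ = ((K : ℝ) + α + β) * ∑ k ∈ Finset.range (K + 1), T K k := by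
              rw [← Finset.sum_add_distrib, Finset.mul_sum]
              exact Finset.sum_congr rfl fun k _ => by ring
      -- now conclude
      have hK1 : (0 : ℝ) < (K : ℝ) + 1 := by positivity
      have hKab : (0 : ℝ) < (K : ℝ) + α + β := by positivity
      have hGK1 : (0 : ℝ) < Real.Gamma ((K : ℝ) + 1) := Real.Gamma_pos_of_pos hK1
      have e5 : ((K + 1 : ℕ) : ℝ) + α + β = ((K : ℝ) + α + β) + 1 := by push_cast; ring
      have e6 : ((K + 1 : ℕ) : ℝ) + 1 = ((K : ℝ) + 1) + 1 := by push_cast; ring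
      have := key
      rw [ih] at this
      have hS : ∑ k ∈ Finset.range (K + 1 + 1), T (K + 1) k =
          ((K : ℝ) + α + β) *
            (Real.Gamma α * Real.Gamma β * Real.Gamma ((K : ℝ) + α + β) /
              (Real.Gamma (α + β) * Real.Gamma ((K : ℝ) + 1))) / ((K : ℝ) + 1) := by
        field_simp at this ⊢
        linarith [this]
      rw [hS, e5, e6, Real.Gamma_add_one hKab.ne', Real.Gamma_add_one hK1.ne']
      field_simp

private lemma shift_expand (f : ℝ → ℝ) (a : ℝ) (n : ℕ) :
    f (a + n) = ∑ k ∈ Finset.range (n + 1), (n.choose k : ℝ) * fdiff^[k] f a := by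
  induction n generalizing f with
  | zero => simp
  | succ n ih =>
      have h1 : f (a + ((n + 1 : ℕ) : ℝ)) = f (a + n) + fdiff f (a + n) := by
        simp only [fdiff]
        push_cast
        ring_nf
      rw [h1, ih f, ih (fdiff f)]
      have h2 : ∀ k ∈ Finset.range (n + 1), (n.choose k : ℝ) * fdiff^[k] (fdiff f) a
          = (n.choose k : ℝ) * fdiff^[k + 1] f a := by
        intro k _
        rw [Function.iterate_succ_apply]
      rw [Finset.sum_congr rfl h2]
      rw [Finset.sum_range_succ' (fun k => (((n + 1).choose k : ℕ) : ℝ) * fdiff^[k] f a) (n + 1)]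
      have h3 : ∑ k ∈ Finset.range (n + 1), (((n + 1).choose (k + 1) : ℕ) : ℝ) * fdiff^[k + 1] f a
          = ∑ k ∈ Finset.range (n + 1),
              ((n.choose k : ℝ) * fdiff^[k + 1] f a + (n.choose (k + 1) : ℝ) * fdiff^[k + 1] f a) := by
        refine Finset.sum_congr rfl fun k _ => ?_
        rw [Nat.choose_succ_succ]
        push_cast
        ring
      rw [h3, Finset.sum_add_distrib]
      have h4 : ∑ k ∈ Finset.range (n + 1), (n.choose (k + 1) : ℝ) * fdiff^[k + 1] f a + (n.choose 0 : ℝ) * fdiff^[0] f a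
          = ∑ k ∈ Finset.range (n + 1 + 1), (n.choose k : ℝ) * fdiff^[k] f a :=
        (Finset.sum_range_succ' (fun k => ((n.choose k : ℕ) : ℝ) * fdiff^[k] f a) (n + 1)).symm
      have h5 : ∑ k ∈ Finset.range (n + 1 + 1), (n.choose k : ℝ) * fdiff^[k] f a
          = ∑ k ∈ Finset.range (n + 1), (n.choose k : ℝ) * fdiff^[k] f a := by
        rw [Finset.sum_range_succ, Nat.choose_succ_self]
        simp
      simp only [Nat.choose_zero_right, Nat.cast_one, one_mul, Function.iterate_zero_apply] at h4 ⊢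
      linarith [h4, h5]

private lemma tri_swap (n : ℕ) (g : ℕ → ℕ → ℝ) :
    ∑ t ∈ Finset.range (n + 1), ∑ s ∈ Finset.range (t + 1), g t s =
      ∑ s ∈ Finset.range (n + 1), ∑ t ∈ Finset.Icc s n, g t s := by
  induction n with
  | zero => simp
  | succ n ih =>
      rw [Finset.sum_range_succ, ih]
      rw [Finset.sum_range_succ (fun s => ∑ t ∈ Finset.Icc s (n + 1), g t s) (n + 1)]
      simp only [Finset.Icc_self, Finset.sum_singleton]
      have h1 : ∀ s ∈ Finset.range (n + 1), ∑ t ∈ Finset.Icc s (n + 1), g t s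
          = ∑ t ∈ Finset.Icc s n, g t s + g (n + 1) s := by
        intro s hs
        have hsn : s ≤ n := by have := Finset.mem_range.mp hs; omega
        rw [← Finset.sum_Icc_succ_top (by omega : s ≤ n + 1)]
      rw [Finset.sum_congr rfl h1, Finset.sum_add_distrib]
      rw [Finset.sum_range_succ (fun s => g (n + 1) s) (n + 1)]
      ring

private lemma hockey (q M : ℕ) :
    ∑ j ∈ Finset.range (M + 1), (j + q).choose q = (M + q + 1).choose (q + 1) := by
  induction M with
  | zero => simp
  | succ M ih =>
      rw [Finset.sum_range_succ, ih]
      rw [show M + 1 + q + 1 = (M + q + 1) + 1 by ring, Nat.choose_succ_succ (M + q + 1) q]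
      rw [show M + 1 + q = M + q + 1 by ring]
      exact Nat.add_comm _ _

private lemma int_repr : ∀ q : ℕ, 1 ≤ q → ∀ (h : ℝ → ℝ) (a : ℝ),
    (∀ k < q, fdiff^[k] h a = 0) → ∀ n : ℕ,
    ∑ s ∈ Finset.range (n + 1), (((n - s + q - 1).choose (q - 1) : ℕ) : ℝ) * fdiff^[q] h (a + s)
      = h (a + n + q) := by
  intro q
  induction q with
  | zero => omega
  | succ q ihq =>
      intro _ h a hic n
      rcases Nat.eq_zero_or_pos q with hq0 | hq1
      · subst hq0
        have e : ∀ s ∈ Finset.range (n + 1),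
            (((n - s + 1 - 1).choose (1 - 1) : ℕ) : ℝ) * fdiff^[1] h (a + s)
              = (fun i : ℕ => h (a + i)) (s + 1) - (fun i : ℕ => h (a + i)) s := by
          intro s _
          simp only [show (1:ℕ) - 1 = 0 from rfl, Nat.choose_zero_right, Nat.cast_one, one_mul,
            Function.iterate_one, fdiff]
          push_cast
          ring_nf
        rw [Finset.sum_congr rfl e, Finset.sum_range_sub (fun i : ℕ => h (a + i)) (n + 1)]
        have h0 := hic 0 (by omega)
        simp only [Function.iterate_zero_apply] at h0
        simp only [Nat.cast_zero, add_zero, h0]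
        push_cast
        ring_nf
      · -- q ≥ 1
        have hcho : ∀ s, s ≤ n →
            (∑ t ∈ Finset.Icc s n, (t - s + q - 1).choose (q - 1))
              = (n - s + (q + 1) - 1).choose (q + 1 - 1) := by
          intro s hs
          rw [← Finset.Ico_add_one_right_eq_Icc, Finset.sum_Ico_eq_sum_range]
          calc ∑ i ∈ Finset.range (n + 1 - s), ((s + i) - s + q - 1).choose (q - 1)
              = ∑ i ∈ Finset.range ((n - s) + 1), (i + (q - 1)).choose (q - 1) := by
                rw [show n + 1 - s = (n - s) + 1 by omega]
                exact Finset.sum_congr rfl fun i _ => by congr 1; omega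
            _ = ((n - s) + (q - 1) + 1).choose ((q - 1) + 1) := hockey (q - 1) (n - s)
            _ = (n - s + (q + 1) - 1).choose (q + 1 - 1) := by congr 1 <;> omega
        have hicg : ∀ k < q, fdiff^[k] (fdiff h) a = 0 := by
          intro k hk
          rw [← Function.iterate_succ_apply]
          exact hic (k + 1) (by omega)
        calc ∑ s ∈ Finset.range (n + 1),
              (((n - s + (q + 1) - 1).choose (q + 1 - 1) : ℕ) : ℝ) * fdiff^[q + 1] h (a + s)
            = ∑ s ∈ Finset.range (n + 1), ∑ t ∈ Finset.Icc s n,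
                (((t - s + q - 1).choose (q - 1) : ℕ) : ℝ) * fdiff^[q + 1] h (a + s) := by
              refine Finset.sum_congr rfl fun s hs => ?_
              rw [← hcho s (Nat.lt_succ_iff.mp (Finset.mem_range.mp hs)), Nat.cast_sum,
                Finset.sum_mul]
          _ = ∑ t ∈ Finset.range (n + 1), ∑ s ∈ Finset.range (t + 1),
                (((t - s + q - 1).choose (q - 1) : ℕ) : ℝ) * fdiff^[q + 1] h (a + s) :=
              (tri_swap n _).symm
          _ = ∑ t ∈ Finset.range (n + 1),
                ((fun i : ℕ => h (a + i + q)) (t + 1) - (fun i : ℕ => h (a + i + q)) t) := by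
              refine Finset.sum_congr rfl fun t _ => ?_
              have e2 : ∀ s ∈ Finset.range (t + 1),
                  (((t - s + q - 1).choose (q - 1) : ℕ) : ℝ) * fdiff^[q + 1] h (a + s)
                    = (((t - s + q - 1).choose (q - 1) : ℕ) : ℝ) * fdiff^[q] (fdiff h) (a + s) := by
                intro s _
                rw [Function.iterate_succ_apply]
              rw [Finset.sum_congr rfl e2, ihq hq1 (fdiff h) a hicg t]
              simp only [fdiff]
              push_cast
              ring_nf
          _ = h (a + n + (q + 1 : ℕ)) := by
              rw [Finset.sum_range_sub (fun i : ℕ => h (a + i + q)) (n + 1)]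
              have hq0 : h (a + (0 : ℕ) + q) = 0 := by
                have := shift_expand h a q
                have hz : ∀ k ∈ Finset.range (q + 1), ((q.choose k : ℕ) : ℝ) * fdiff^[k] h a = 0 := by
                  intro k hk
                  rw [hic k (Finset.mem_range.mp hk), mul_zero]
                rw [Finset.sum_congr rfl hz, Finset.sum_const_zero] at this
                simpa using this
              rw [hq0]
              push_cast
              ring_nf

private lemma repr_lemma (μ ν : ℝ) (p m : ℕ) (hμp : (p : ℝ) < μ) (hm : m = ⌈μ⌉₊)
    (hμm : μ < m) (hν : ν = m - μ) (f : ℝ → ℝ) (a : ℕ)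
    (hz : ∀ k, p ≤ k → k ≤ m - 1 → fdiff^[k] f a = 0)
    (j : ℕ) (hj : a + m - p ≤ j) :
    ∑ i ∈ Finset.range (j - (a + m - p) + 1),
        gff ((j : ℝ) - (a + ν + i) - 1) (μ - p - 1) * caputo μ a f ((a : ℝ) + ν + i)
      = Real.Gamma (μ - p) * fdiff^[p] f j := by
  have hpm : p < m := by exact_mod_cast hμp.trans hμm
  obtain ⟨r, hr⟩ : ∃ r, m - p = r + 1 := ⟨m - p - 1, by omega⟩
  set N := j - (a + m - p) with hN
  have hjeq : j = a + (m - p) + N := by omega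
  have hν0 : 0 < ν := by rw [hν]; linarith
  have hα : (0 : ℝ) < μ - p := by linarith
  have hΓν : (0 : ℝ) < Real.Gamma ν := Real.Gamma_pos_of_pos hν0
  have hmp_r : (m : ℝ) - p = (r : ℝ) + 1 := by
    have h1 : ((m - p : ℕ) : ℝ) = (m : ℝ) - p := Nat.cast_sub hpm.le
    rw [← h1, hr]; push_cast; ring
  have hjcast : (j : ℝ) = (a : ℝ) + ((m : ℝ) - p) + N := by
    rw [hjeq]; push_cast [Nat.cast_sub hpm.le]; ring
  -- caputo expanded
  have hcap : ∀ i : ℕ, caputo μ a f ((a : ℝ) + ν + i) =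
      ∑ l ∈ Finset.range (i + 1),
        (1 / Real.Gamma ν) *
          (gff ((a : ℝ) + ν + i - ((a : ℝ) + l) - 1) (ν - 1) * fdiff^[m] f ((a : ℝ) + l)) := by
    intro i
    simp only [caputo, fsum]
    rw [show ((⌈μ⌉₊ : ℕ) : ℝ) - μ = ν by rw [← hm, ← hν], show ⌈μ⌉₊ = m from hm.symm]
    rw [show (a : ℝ) + ν + i - ν - a = (i : ℝ) by ring, Int.floor_natCast, Int.toNat_natCast]
    rw [Finset.mul_sum]
  calc ∑ i ∈ Finset.range (N + 1),
        gff ((j : ℝ) - (a + ν + i) - 1) (μ - p - 1) * caputo μ a f ((a : ℝ) + ν + i)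
      = ∑ i ∈ Finset.range (N + 1), ∑ l ∈ Finset.range (i + 1),
          (1 / Real.Gamma ν) *
            (gff ((j : ℝ) - (a + ν + i) - 1) (μ - p - 1) *
              (gff ((a : ℝ) + ν + i - ((a : ℝ) + l) - 1) (ν - 1) * fdiff^[m] f ((a : ℝ) + l))) := by
        refine Finset.sum_congr rfl fun i _ => ?_
        rw [hcap i, Finset.mul_sum]
        exact Finset.sum_congr rfl fun l _ => by ring
    _ = ∑ l ∈ Finset.range (N + 1), ∑ i ∈ Finset.Icc l N,
          (1 / Real.Gamma ν) *
            (gff ((j : ℝ) - (a + ν + i) - 1) (μ - p - 1) *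
              (gff ((a : ℝ) + ν + i - ((a : ℝ) + l) - 1) (ν - 1) * fdiff^[m] f ((a : ℝ) + l))) :=
        tri_swap N _
    _ = ∑ l ∈ Finset.range (N + 1),
          Real.Gamma (μ - p) *
            ((((N - l + (m - p) - 1).choose ((m - p) - 1) : ℕ) : ℝ) *
              fdiff^[m - p] (fdiff^[p] f) ((a : ℝ) + l)) := by
        refine Finset.sum_congr rfl fun l hl => ?_
        have hlN : l ≤ N := by have := Finset.mem_range.mp hl; omega
        rw [← Finset.Ico_add_one_right_eq_Icc, Finset.sum_Ico_eq_sum_range,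
          show N + 1 - l = (N - l) + 1 by omega]
        have main : ∀ k ∈ Finset.range ((N - l) + 1),
            (1 / Real.Gamma ν) *
              (gff ((j : ℝ) - (a + ν + (l + k : ℕ)) - 1) (μ - p - 1) *
                (gff ((a : ℝ) + ν + (l + k : ℕ) - ((a : ℝ) + l) - 1) (ν - 1) *
                  fdiff^[m] f ((a : ℝ) + l)))
              = ((1 / Real.Gamma ν) * fdiff^[m] f ((a : ℝ) + l)) *
                (Real.Gamma (((N - l : ℕ) : ℝ) - k + (μ - p)) /
                    Real.Gamma (((N - l : ℕ) : ℝ) - k + 1) *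
                  (Real.Gamma ((k : ℝ) + ν) / Real.Gamma ((k : ℝ) + 1))) := by
          intro k hk
          have hkK : k ≤ N - l := by have := Finset.mem_range.mp hk; omega
          have c1 : (j : ℝ) - (a + ν + (l + k : ℕ)) - 1 + 1
              = ((N - l : ℕ) : ℝ) - k + (μ - p) := by
            rw [hjcast, hν, Nat.cast_sub hlN]; push_cast; ring
          have c2 : (j : ℝ) - (a + ν + (l + k : ℕ)) - 1 - (μ - p - 1) + 1
              = ((N - l : ℕ) : ℝ) - k + 1 := by
            rw [hjcast, hν, Nat.cast_sub hlN]; push_cast; ring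
          have c3 : (a : ℝ) + ν + (l + k : ℕ) - ((a : ℝ) + l) - 1 + 1 = (k : ℝ) + ν := by
            push_cast; ring
          have c4 : (a : ℝ) + ν + (l + k : ℕ) - ((a : ℝ) + l) - 1 - (ν - 1) + 1
              = (k : ℝ) + 1 := by
            push_cast; ring
          simp only [gff, c1, c2, c3, c4]
          ring
        rw [Finset.sum_congr rfl main, ← Finset.mul_sum,
          gamma_vdm (μ - p) ν hα hν0 (N - l)]
        -- now pure Gamma/factorial algebra
        have e1 : ((N - l : ℕ) : ℝ) + (μ - p) + ν = (((N - l) + r : ℕ) : ℝ) + 1 := by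
          rw [hν]; push_cast; linarith [hmp_r]
        have e2 : μ - p + ν = (r : ℝ) + 1 := by rw [hν]; linarith [hmp_r]
        rw [e1, e2, Real.Gamma_nat_eq_factorial, Real.Gamma_nat_eq_factorial,
          Real.Gamma_nat_eq_factorial]
        have hfact : (((N - l) + r).factorial : ℝ)
            = (((N - l) + r).choose r : ℝ) * (N - l).factorial * r.factorial := by
          rw [← Nat.add_choose_mul_factorial_mul_factorial (N - l) r]
          push_cast; ring
        have hch : ((N - l) + r).choose r = (N - l + (m - p) - 1).choose ((m - p) - 1) := by
          rw [hr]; congr 1 <;> omega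
        rw [hfact, hch]
        have hiter : fdiff^[m] f = fdiff^[m - p] (fdiff^[p] f) := by
          rw [← Function.iterate_add_apply]
          congr 1
          omega
        rw [hiter]
        have hf1 : ((N - l).factorial : ℝ) ≠ 0 := by positivity
        have hf2 : (r.factorial : ℝ) ≠ 0 := by positivity
        field_simp
    _ = Real.Gamma (μ - p) * fdiff^[p] f j := by
        rw [← Finset.mul_sum]
        congr 1
        have hic : ∀ k < m - p, fdiff^[k] (fdiff^[p] f) ((a : ℕ) : ℝ) = 0 := by
          intro k hk
          rw [← Function.iterate_add_apply]
          exact hz (k + p) (by omega) (by omega)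
        have := int_repr (m - p) (by omega) (fdiff^[p] f) ((a : ℕ) : ℝ) hic N
        rw [this]
        congr 1
        rw [hjcast, Nat.cast_sub hpm.le]
        ring

theorem stmt14 (μ ν : ℝ) (p : ℕ) (hμ : (p : ℝ) < μ) (hni : ∀ n : ℤ, μ ≠ n)
    (m : ℕ) (hm : m = ⌈μ⌉₊) (hν : ν = m - μ) (f : ℝ → ℝ) (a b : ℕ)
    (hb : a + m - p ≤ b) (hz : ∀ k, p ≤ k → k ≤ m - 1 → fdiff^[k] f a = 0)
    (γ δ : ℝ) (hγ : 1 < γ) (hδ : 1 < δ) (hγδ : 1 / γ + 1 / δ = 1) :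
    ∑ j ∈ Finset.Icc (a + m - p) b, |fdiff^[p] f (j : ℝ)| ^ δ ≤
      (1 / Real.Gamma (μ - p) ^ δ) *
        (∑ j ∈ Finset.Icc (a + m - p) b,
            (∑ i ∈ Finset.range (j - (a + m - p) + 1),
                gff ((j : ℝ) - (a + ν + i) - 1) (μ - p - 1) ^ γ) ^ (δ / γ)) *
        (∑ i ∈ Finset.range (b - (a + m - p) + 1), |caputo μ a f (a + ν + i)| ^ δ) := by
  have hμm : μ < m := by
    refine lt_of_le_of_ne (by rw [hm]; exact Nat.le_ceil μ) ?_
    have := hni (m : ℤ)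
    simpa using this
  have hpm : p < m := by exact_mod_cast hμ.trans hμm
  have hα : (0 : ℝ) < μ - p := by linarith
  have hΓ : (0 : ℝ) < Real.Gamma (μ - p) := Real.Gamma_pos_of_pos hα
  have conj : Real.HolderConjugate γ δ := ⟨by rw [inv_one, ← one_div, ← one_div]; exact hγδ, by linarith, by linarith⟩
  have hδ0 : (0 : ℝ) < δ := by linarith
  have hγ0 : (0 : ℝ) < γ := by linarith
  set Y := ∑ i ∈ Finset.range (b - (a + m - p) + 1), |caputo μ a f (a + ν + i)| ^ δ with hY
  have hY0 : 0 ≤ Y := Finset.sum_nonneg fun i _ => Real.rpow_nonneg (abs_nonneg _) δ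
  -- positivity of the kernel
  have hgpos : ∀ j : ℕ, a + m - p ≤ j → ∀ i ∈ Finset.range (j - (a + m - p) + 1),
      0 ≤ gff ((j : ℝ) - (a + ν + i) - 1) (μ - p - 1) := by
    intro j hj1 i hi
    have hiN : i ≤ j - (a + m - p) := by have := Finset.mem_range.mp hi; omega
    have hjc : (j : ℝ) = (a : ℝ) + ((m : ℝ) - p) + (j - (a + m - p) : ℕ) := by
      rw [Nat.cast_sub hj1]
      push_cast [Nat.cast_sub (by omega : p ≤ a + m)]
      ring
    have hiN' : (i : ℝ) ≤ ((j - (a + m - p) : ℕ) : ℝ) := Nat.cast_le.mpr hiN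
    have h1 : (0 : ℝ) < (j : ℝ) - (a + ν + i) - 1 + 1 := by
      rw [hjc, hν]; push_cast; linarith
    have h2 : (0 : ℝ) < (j : ℝ) - (a + ν + i) - 1 - (μ - p - 1) + 1 := by
      rw [hjc, hν]; push_cast; linarith
    exact le_of_lt (div_pos (Real.Gamma_pos_of_pos h1) (Real.Gamma_pos_of_pos h2))
  -- per-j bound
  have key : ∀ j ∈ Finset.Icc (a + m - p) b,
      |fdiff^[p] f (j : ℝ)| ^ δ ≤
        (1 / Real.Gamma (μ - p) ^ δ) *
          ((∑ i ∈ Finset.range (j - (a + m - p) + 1),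
              gff ((j : ℝ) - (a + ν + i) - 1) (μ - p - 1) ^ γ) ^ (δ / γ) * Y) := by
    intro j hjmem
    obtain ⟨hj1, hj2⟩ := Finset.mem_Icc.mp hjmem
    set s := Finset.range (j - (a + m - p) + 1) with hs
    set g : ℕ → ℝ := fun i => gff ((j : ℝ) - (a + ν + i) - 1) (μ - p - 1) with hg
    set y : ℕ → ℝ := fun i => caputo μ a f ((a : ℝ) + ν + i) with hy
    have hrep := repr_lemma μ ν p m hμ hm hμm hν f a hz j hj1
    have habs : |fdiff^[p] f (j : ℝ)| = |∑ i ∈ s, g i * y i| / Real.Gamma (μ - p) := by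
      rw [hrep, abs_mul, abs_of_pos hΓ]
      field_simp
    have step1 : |∑ i ∈ s, g i * y i| ≤ ∑ i ∈ s, g i * |y i| := by
      refine (Finset.abs_sum_le_sum_abs _ _).trans (le_of_eq ?_)
      refine Finset.sum_congr rfl fun i hi => ?_
      rw [abs_mul, abs_of_nonneg (hgpos j hj1 i hi)]
    have step2 : ∑ i ∈ s, g i * |y i| ≤
        (∑ i ∈ s, g i ^ γ) ^ (1 / γ) * (∑ i ∈ s, |y i| ^ δ) ^ (1 / δ) :=
      Real.inner_le_Lp_mul_Lq_of_nonneg s conj (fun i hi => hgpos j hj1 i hi)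
        (fun i _ => abs_nonneg _)
    have hA0 : 0 ≤ ∑ i ∈ s, g i ^ γ :=
      Finset.sum_nonneg fun i hi => Real.rpow_nonneg (hgpos j hj1 i hi) γ
    have hB0 : 0 ≤ ∑ i ∈ s, |y i| ^ δ :=
      Finset.sum_nonneg fun i _ => Real.rpow_nonneg (abs_nonneg _) δ
    have hBY : ∑ i ∈ s, |y i| ^ δ ≤ Y := by
      refine Finset.sum_le_sum_of_subset_of_nonneg ?_
        (fun i _ _ => Real.rpow_nonneg (abs_nonneg _) δ)
      exact Finset.range_subset_range.mpr (by omega)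
    have chain : |fdiff^[p] f (j : ℝ)| ≤
        ((∑ i ∈ s, g i ^ γ) ^ (1 / γ) * (∑ i ∈ s, |y i| ^ δ) ^ (1 / δ)) / Real.Gamma (μ - p) := by
      rw [habs]
      gcongr
      exact step1.trans step2
    calc |fdiff^[p] f (j : ℝ)| ^ δ
        ≤ (((∑ i ∈ s, g i ^ γ) ^ (1 / γ) * (∑ i ∈ s, |y i| ^ δ) ^ (1 / δ)) /
            Real.Gamma (μ - p)) ^ δ :=
          Real.rpow_le_rpow (abs_nonneg _) chain hδ0.le
      _ = (1 / Real.Gamma (μ - p) ^ δ) *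
            ((∑ i ∈ s, g i ^ γ) ^ (δ / γ) * ∑ i ∈ s, |y i| ^ δ) := by
          rw [Real.div_rpow (by positivity) hΓ.le,
            Real.mul_rpow (Real.rpow_nonneg hA0 _) (Real.rpow_nonneg hB0 _),
            ← Real.rpow_mul hA0, ← Real.rpow_mul hB0,
            show 1 / γ * δ = δ / γ by ring,
            show 1 / δ * δ = 1 by field_simp, Real.rpow_one]
          ring
      _ ≤ (1 / Real.Gamma (μ - p) ^ δ) *
            ((∑ i ∈ s, g i ^ γ) ^ (δ / γ) * Y) := by
          refine mul_le_mul_of_nonneg_left ?_ (by positivity)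
          exact mul_le_mul_of_nonneg_left hBY (Real.rpow_nonneg hA0 _)
  calc ∑ j ∈ Finset.Icc (a + m - p) b, |fdiff^[p] f (j : ℝ)| ^ δ
      ≤ ∑ j ∈ Finset.Icc (a + m - p) b,
          (1 / Real.Gamma (μ - p) ^ δ) *
            ((∑ i ∈ Finset.range (j - (a + m - p) + 1),
                gff ((j : ℝ) - (a + ν + i) - 1) (μ - p - 1) ^ γ) ^ (δ / γ) * Y) :=
        Finset.sum_le_sum key
    _ = (1 / Real.Gamma (μ - p) ^ δ) *
          (∑ j ∈ Finset.Icc (a + m - p) b,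
            (∑ i ∈ Finset.range (j - (a + m - p) + 1),
                gff ((j : ℝ) - (a + ν + i) - 1) (μ - p - 1) ^ γ) ^ (δ / γ)) * Y := by
        rw [← Finset.mul_sum, ← Finset.sum_mul, ← mul_assoc]
end

section
/- Let μ > 0 be non-integer, m = ⌈μ⌉, ν = m - μ, f defined on ℕ_a, a ∈ ℤ⁺. Then Δ^{-μ}(Δ_*^μ f(t)) = Δ^{-m}(Δ^m f(t)) for all t ∈ ℕ_{a+m}, where Δ_*^μ f = Δ^{-ν}(Δ^m f) and Δ^{-α} denotes the α-th fractional sum. -/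
open Finset

noncomputable def bcoef (x : ℝ) (k : ℕ) : ℝ := Real.Gamma (x + k) / k.factorial

lemma brec (x : ℝ) (hx : 0 < x) (k : ℕ) :
    ((k : ℝ) + 1) * bcoef x (k + 1) = (x + k) * bcoef x k := by
  have h : Real.Gamma (x + (k + 1 : ℕ)) = (x + k) * Real.Gamma (x + k) := by
    push_cast
    rw [show x + ((k : ℝ) + 1) = (x + k) + 1 by ring,
      Real.Gamma_add_one (by positivity)]
  have hf : ((k + 1 : ℕ).factorial : ℝ) = ((k : ℝ) + 1) * k.factorial := by
    rw [Nat.factorial_succ]; push_cast; ring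
  rw [bcoef, bcoef, h, hf]
  have h1 : ((k : ℝ) + 1) ≠ 0 := by positivity
  have h2 : (k.factorial : ℝ) ≠ 0 := by positivity
  field_simp

lemma vand (x y : ℝ) (hx : 0 < x) (hy : 0 < y) (N : ℕ) :
    ∑ k ∈ Finset.range (N + 1), bcoef x (N - k) * bcoef y k =
      Real.Gamma x * Real.Gamma y / Real.Gamma (x + y) * bcoef (x + y) N := by
  induction N with
  | zero =>
      simp [bcoef]
      rw [div_mul_cancel₀ _ (Real.Gamma_pos_of_pos (by positivity : (0:ℝ) < x + y)).ne']
  | succ N ih =>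
      have key : ((N : ℝ) + 1) * ∑ k ∈ Finset.range (N + 2), bcoef x (N + 1 - k) * bcoef y k
          = (x + y + N) * ∑ k ∈ Finset.range (N + 1), bcoef x (N - k) * bcoef y k := by
        rw [Finset.mul_sum]
        have split : ∀ k ∈ Finset.range (N + 2),
            ((N : ℝ) + 1) * (bcoef x (N + 1 - k) * bcoef y k)
            = (((N : ℝ) + 1 - k) * bcoef x (N + 1 - k)) * bcoef y k
              + bcoef x (N + 1 - k) * ((k : ℝ) * bcoef y k) := by
          intro k hk; ring
        rw [Finset.sum_congr rfl split, Finset.sum_add_distrib]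
        -- first sum: last term (k = N+1) vanishes
        have e1 : ∑ k ∈ Finset.range (N + 2),
            (((N : ℝ) + 1 - k) * bcoef x (N + 1 - k)) * bcoef y k
            = ∑ k ∈ Finset.range (N + 1), ((x + ((N:ℝ) - k)) * bcoef x (N - k)) * bcoef y k := by
          rw [Finset.sum_range_succ]
          simp only [Nat.sub_self, Nat.cast_add, Nat.cast_one, sub_self, zero_mul]
          rw [add_zero]
          refine Finset.sum_congr rfl fun k hk => ?_
          have hk' : k ≤ N := Nat.lt_succ_iff.mp (Finset.mem_range.mp hk)
          have h1 : N + 1 - k = (N - k) + 1 := by omega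
          have h2 : ((N : ℝ) + 1 - k) = ((N - k : ℕ) : ℝ) + 1 := by
            push_cast [Nat.cast_sub hk']; ring
          rw [h1, h2, brec x hx (N - k), Nat.cast_sub hk']
        -- second sum: first term (k = 0) vanishes
        have e2 : ∑ k ∈ Finset.range (N + 2),
            bcoef x (N + 1 - k) * ((k : ℝ) * bcoef y k)
            = ∑ k ∈ Finset.range (N + 1), bcoef x (N - k) * ((y + k) * bcoef y k) := by
          rw [Finset.sum_range_succ']
          simp only [Nat.cast_zero, zero_mul, mul_zero, add_zero]
          refine Finset.sum_congr rfl fun k hk => ?_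
          have h1 : N + 1 - (k + 1) = N - k := by omega
          have h2 : ((k + 1 : ℕ) : ℝ) = (k : ℝ) + 1 := by push_cast; ring
          rw [h1, h2, brec y hy k]
        rw [e1, e2, ← Finset.sum_add_distrib, Finset.mul_sum]
        refine Finset.sum_congr rfl fun k hk => ?_
        ring
      have hN1 : ((N : ℝ) + 1) ≠ 0 := by positivity
      have hb : ((N : ℝ) + 1) * bcoef (x + y) (N + 1) = (x + y + N) * bcoef (x + y) N :=
        brec (x + y) (by positivity) N
      have := key
      rw [ih] at this
      -- goal: sum = C * bcoef (x+y) (N+1)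
      have : ((N : ℝ) + 1) * ∑ k ∈ Finset.range (N + 2), bcoef x (N + 1 - k) * bcoef y k
          = ((N : ℝ) + 1) * (Real.Gamma x * Real.Gamma y / Real.Gamma (x + y) * bcoef (x + y) (N + 1)) := by
        rw [this]
        rw [show ((N:ℝ)+1) * (Real.Gamma x * Real.Gamma y / Real.Gamma (x + y) * bcoef (x + y) (N + 1))
          = Real.Gamma x * Real.Gamma y / Real.Gamma (x + y) * (((N:ℝ)+1) * bcoef (x + y) (N + 1)) by ring, hb]
        ring
      exact mul_left_cancel₀ hN1 this

section aux

lemma gff_eq (e x : ℝ) (k : ℕ) (h1 : e + 1 = x + k) (h2 : e - (x - 1) + 1 = (k : ℝ) + 1) :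
    gff e (x - 1) = Real.Gamma (x + k) / k.factorial := by
  rw [gff, h1, h2, Real.Gamma_nat_eq_factorial]

end aux

theorem stmt17 (μ ν : ℝ) (hμ : 0 < μ) (hni : ∀ n : ℤ, μ ≠ n) (m : ℕ)
    (hm : m = ⌈μ⌉₊) (hν : ν = m - μ) (f : ℝ → ℝ) (a n : ℕ) (t : ℝ)
    (ht : t = a + m + n) :
    fsum μ (a + ν) (caputo μ a f) t = fsum (m : ℝ) a (fdiff^[m] f) t := by
  have hμm : μ < m := by
    have h1 : μ ≤ (m : ℝ) := by rw [hm]; exact Nat.le_ceil μ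
    have h2 : μ ≠ (m : ℝ) := by have := hni (m : ℤ); push_cast at this; exact this
    exact lt_of_le_of_ne h1 h2
  have hν0 : 0 < ν := by rw [hν]; linarith
  have hμν : μ + ν = m := by rw [hν]; ring
  set g := fdiff^[m] f with hg
  -- Gamma positivity
  have hΓμ : Real.Gamma μ ≠ 0 := (Real.Gamma_pos_of_pos hμ).ne'
  have hΓν : Real.Gamma ν ≠ 0 := (Real.Gamma_pos_of_pos hν0).ne'
  have hΓm : Real.Gamma (μ + ν) ≠ 0 := (Real.Gamma_pos_of_pos (by linarith)).ne'
  -- floors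
  have e1 : t - μ - ((a : ℝ) + ν) = (n : ℝ) := by rw [ht]; linarith
  have e2 : t - (m : ℝ) - (a : ℝ) = (n : ℝ) := by rw [ht]; ring
  rw [fsum, fsum, e1, e2, Int.floor_natCast, Int.toNat_natCast]
  -- rewrite LHS inner caputo and terms
  have hL : ∀ j ∈ Finset.range (n + 1),
      gff (t - (((a : ℝ) + ν) + j) - 1) (μ - 1) * caputo μ a f (((a : ℝ) + ν) + j)
      = bcoef μ (n - j) * ((1 / Real.Gamma ν) *
          ∑ i ∈ Finset.range (j + 1), bcoef ν (j - i) * g ((a : ℝ) + i)) := by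
    intro j hj
    have hjn : j ≤ n := Nat.lt_succ_iff.mp (Finset.mem_range.mp hj)
    have c1 : t - (((a : ℝ) + ν) + j) - 1 + 1 = μ + ((n - j : ℕ) : ℝ) := by
      rw [ht, Nat.cast_sub hjn]; push_cast; linarith
    have c2 : t - (((a : ℝ) + ν) + j) - 1 - (μ - 1) + 1 = (((n - j : ℕ)) : ℝ) + 1 := by
      rw [ht, Nat.cast_sub hjn]; push_cast; linarith
    rw [gff_eq _ _ _ c1 c2]
    have hcap : caputo μ a f (((a : ℝ) + ν) + j)
        = fsum ν a g (((a : ℝ) + ν) + j) := by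
      rw [caputo, ← hm, ← hν, hg]
    rw [hcap, fsum]
    have c3 : (((a : ℝ) + ν) + j) - ν - a = (j : ℝ) := by ring
    rw [c3, Int.floor_natCast, Int.toNat_natCast]
    rw [bcoef]
    congr 2
    refine Finset.sum_congr rfl fun i hi => ?_
    have hij : i ≤ j := Nat.lt_succ_iff.mp (Finset.mem_range.mp hi)
    have d1 : (((a : ℝ) + ν) + j) - ((a : ℝ) + i) - 1 + 1 = ν + ((j - i : ℕ) : ℝ) := by
      rw [Nat.cast_sub hij]; push_cast; ring
    have d2 : (((a : ℝ) + ν) + j) - ((a : ℝ) + i) - 1 - (ν - 1) + 1 = ((j - i : ℕ) : ℝ) + 1 := by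
      rw [Nat.cast_sub hij]; push_cast; ring
    rw [gff_eq _ _ _ d1 d2, bcoef]
  have hR : ∀ i ∈ Finset.range (n + 1),
      gff (t - ((a : ℝ) + i) - 1) ((m : ℝ) - 1) * g ((a : ℝ) + i)
      = bcoef (μ + ν) (n - i) * g ((a : ℝ) + i) := by
    intro i hi
    have hin : i ≤ n := Nat.lt_succ_iff.mp (Finset.mem_range.mp hi)
    have c1 : t - ((a : ℝ) + i) - 1 + 1 = (m : ℝ) + ((n - i : ℕ) : ℝ) := by
      rw [ht, Nat.cast_sub hin]; push_cast; ring
    have c2 : t - ((a : ℝ) + i) - 1 - ((m : ℝ) - 1) + 1 = ((n - i : ℕ) : ℝ) + 1 := by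
      rw [ht, Nat.cast_sub hin]; push_cast; ring
    rw [gff_eq _ _ _ c1 c2, bcoef, hμν]
  rw [Finset.sum_congr rfl hL, Finset.sum_congr rfl hR]
  -- now pure algebra
  rw [show Real.Gamma (m : ℝ) = Real.Gamma (μ + ν) by rw [hμν]]
  -- move to double sum
  have lhs_eq : (1 / Real.Gamma μ) * ∑ j ∈ Finset.range (n + 1),
      bcoef μ (n - j) * ((1 / Real.Gamma ν) *
        ∑ i ∈ Finset.range (j + 1), bcoef ν (j - i) * g ((a : ℝ) + i))
      = (1 / (Real.Gamma μ * Real.Gamma ν)) * ∑ j ∈ Finset.range (n + 1),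
        ∑ i ∈ Finset.range (j + 1), bcoef μ (n - j) * bcoef ν (j - i) * g ((a : ℝ) + i) := by
    rw [Finset.mul_sum, Finset.mul_sum]
    refine Finset.sum_congr rfl fun j _ => ?_
    rw [show ∑ i ∈ Finset.range (j + 1), bcoef μ (n - j) * bcoef ν (j - i) * g ((a : ℝ) + i)
        = bcoef μ (n - j) * ∑ i ∈ Finset.range (j + 1), bcoef ν (j - i) * g ((a : ℝ) + i) by
      rw [Finset.mul_sum]; exact Finset.sum_congr rfl fun i _ => by ring]
    field_simp
  rw [lhs_eq]
  have swap : ∑ j ∈ Finset.range (n + 1), ∑ i ∈ Finset.range (j + 1),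
      bcoef μ (n - j) * bcoef ν (j - i) * g ((a : ℝ) + i)
      = ∑ i ∈ Finset.range (n + 1), ∑ j ∈ Finset.Ico i (n + 1),
        bcoef μ (n - j) * bcoef ν (j - i) * g ((a : ℝ) + i) := by
    have hiff : ∀ j i : ℕ, j ∈ Finset.range (n + 1) ∧ i ∈ Finset.range (j + 1) ↔
        j ∈ Finset.Ico i (n + 1) ∧ i ∈ Finset.range (n + 1) := by
      intro j i
      simp only [Finset.mem_range, Finset.mem_Ico]
      omega
    exact Finset.sum_comm' hiff
  rw [swap]
  have inner : ∀ i ∈ Finset.range (n + 1),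
      ∑ j ∈ Finset.Ico i (n + 1), bcoef μ (n - j) * bcoef ν (j - i) * g ((a : ℝ) + i)
      = (Real.Gamma μ * Real.Gamma ν / Real.Gamma (μ + ν) * bcoef (μ + ν) (n - i))
        * g ((a : ℝ) + i) := by
    intro i hi
    have hin : i ≤ n := Nat.lt_succ_iff.mp (Finset.mem_range.mp hi)
    rw [Finset.sum_Ico_eq_sum_range]
    have hcard : n + 1 - i = (n - i) + 1 := by omega
    rw [hcard]
    have : ∀ k ∈ Finset.range ((n - i) + 1),
        bcoef μ (n - (i + k)) * bcoef ν ((i + k) - i) * g ((a : ℝ) + i)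
        = (bcoef μ ((n - i) - k) * bcoef ν k) * g ((a : ℝ) + i) := by
      intro k hk
      congr 2 <;> · congr 1; omega
    rw [Finset.sum_congr rfl this, ← Finset.sum_mul, vand μ ν hμ hν0]
  rw [Finset.sum_congr rfl inner]
  rw [Finset.mul_sum, Finset.mul_sum]
  refine Finset.sum_congr rfl fun i hi => ?_
  field_simp
end
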